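/- arXiv:1312.3695 — 3 statements merged into one kernel-verified Lean document; each statement's English description precedes it below -/
import Mathlib

section
/- Let S be an n×n Hermitian positive semidefinite complex matrix and v ∈ ℂⁿ. Then v vᴴ + S + I_n is invertible and vᴴ (v vᴴ + S + I_n)⁻¹ v ≤ ‖v‖²/(1 + ‖v‖²) < 1. -/
open Matrix
open scoped ComplexOrder

private lemma aux_vecMulVec_mulVec {n : ℕ} (w u x : Fin n → ℂ) :
    Matrix.vecMulVec w u *ᵥ x = (u ⬝ᵥ x) • w := by
  funext i
  simp only [Matrix.mulVec, dotProduct, Matrix.vecMulVec_apply, Pi.smul_apply,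
    smul_eq_mul, Finset.sum_mul]
  exact Finset.sum_congr rfl fun j _ => by ring

private lemma aux_outer_posSemidef {n : ℕ} (v : Fin n → ℂ) :
    (Matrix.vecMulVec v (star v)).PosSemidef := by
  refine Matrix.PosSemidef.of_dotProduct_mulVec_nonneg ?_ ?_
  · ext i j
    simp [Matrix.conjTranspose_apply, Matrix.vecMulVec_apply, mul_comm]
  · intro x
    rw [aux_vecMulVec_mulVec, dotProduct_smul]
    have h : star x ⬝ᵥ v = star (star v ⬝ᵥ x) := by
      simp [dotProduct, mul_comm]
    rw [h, smul_eq_mul]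
    exact mul_star_self_nonneg _

private lemma aux_real {x V W : ℝ} (hV0 : 0 ≤ V) (hW0 : 0 ≤ W)
    (h1 : x ^ 2 + W ^ 2 ≤ x) (h2 : x ≤ V * W) : x * (1 + V ^ 2) ≤ V ^ 2 := by
  rcases le_or_gt x 0 with hx | hx
  · nlinarith [sq_nonneg V]
  · have hx2 : x ^ 2 ≤ V ^ 2 * W ^ 2 := by nlinarith
    have h3 : x ^ 2 * (1 + V ^ 2) ≤ x * V ^ 2 := by
      nlinarith [hx2, mul_le_mul_of_nonneg_left h1 (sq_nonneg V)]
    nlinarith [h3, hx]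

/-- Let `S` be `n × n` Hermitian positive semidefinite and `v ∈ ℂⁿ`.
Then `v vᴴ + S + I_n` is invertible and
`vᴴ (v vᴴ + S + I_n)⁻¹ v ≤ ‖v‖² / (1 + ‖v‖²) < 1`. -/
theorem quadform_inv_outer_add_posSemidef_add_one_lt_one
    {n : ℕ} (S : Matrix (Fin n) (Fin n) ℂ) (hS : S.PosSemidef)
    (v : EuclideanSpace ℂ (Fin n)) :
    IsUnit (Matrix.vecMulVec v (fun i => starRingEnd ℂ (v i)) + S + 1) ∧
      ((fun i => starRingEnd ℂ (v i)) ⬝ᵥ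
          ((Matrix.vecMulVec v (fun i => starRingEnd ℂ (v i)) + S + 1)⁻¹ *ᵥ v)).re
        ≤ ‖v‖ ^ 2 / (1 + ‖v‖ ^ 2) ∧
      ‖v‖ ^ 2 / (1 + ‖v‖ ^ 2) < 1 := by
  have hv0 : ∃ v0 : Fin n → ℂ, v0 = WithLp.equiv 2 (Fin n → ℂ) v := ⟨_, rfl⟩
  obtain ⟨v0, hv0⟩ := hv0
  have hsv : (fun i => starRingEnd ℂ (v i)) = star v0 := by rw [hv0]; rfl
  set A : Matrix (Fin n) (Fin n) ℂ :=
    Matrix.vecMulVec v (fun i => starRingEnd ℂ (v i)) + S + 1 with hAdef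
  have hA' : A = Matrix.vecMulVec v0 (star v0) + S + 1 := by
    rw [hAdef, hsv, hv0]; rfl
  have hApd : A.PosDef := by
    rw [hA']
    exact Matrix.PosDef.posSemidef_add ((aux_outer_posSemidef v0).add hS) Matrix.PosDef.one
  have hunit : IsUnit A := hApd.isUnit
  have hVpos : (0 : ℝ) < 1 + ‖v‖ ^ 2 := by positivity
  refine ⟨hunit, ?_, ?_⟩
  · -- main inequality
    have hdet : IsUnit A.det := (Matrix.isUnit_iff_isUnit_det A).mp hunit
    set w : Fin n → ℂ := A⁻¹ *ᵥ v0 with hwdef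
    have hAw : A *ᵥ w = v0 := by
      rw [hwdef, Matrix.mulVec_mulVec, Matrix.mul_nonsing_inv A hdet, Matrix.one_mulVec]
    set c : ℂ := star v0 ⬝ᵥ w with hcdef
    have hgoal : ((fun i => starRingEnd ℂ (v i)) ⬝ᵥ (A⁻¹ *ᵥ v)) = c := by
      rw [hcdef, hsv, hwdef, hv0]; rfl
    rw [hgoal]
    -- the key identity
    have hswv : star w ⬝ᵥ v0 = star c := by
      rw [hcdef]
      simp [dotProduct, mul_comm]
    have hkey : star c = c * star c + star w ⬝ᵥ (S *ᵥ w) + star w ⬝ᵥ w := by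
      have h1 : star w ⬝ᵥ (A *ᵥ w) = star c := by rw [hAw, hswv]
      rw [hA', Matrix.add_mulVec, Matrix.add_mulVec, dotProduct_add,
        dotProduct_add, Matrix.one_mulVec, aux_vecMulVec_mulVec,
        dotProduct_smul, ← hcdef, smul_eq_mul, hswv] at h1
      exact h1.symm
    -- identify the pieces with inner products in EuclideanSpace
    set w' : EuclideanSpace ℂ (Fin n) := (WithLp.equiv 2 (Fin n → ℂ)).symm w with hw'
    have hcinner : c = inner ℂ v w' := by rw [hcdef, hv0]; exact dotProduct_comm _ _
    have htinner : (star w ⬝ᵥ w : ℂ) = inner ℂ w' w' := dotProduct_comm _ _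
    -- real quantities
    have hs0 : 0 ≤ (star w ⬝ᵥ (S *ᵥ w)).re := hS.re_dotProduct_nonneg w
    have htre : (star w ⬝ᵥ w : ℂ).re = ‖w'‖ ^ 2 := by
      rw [htinner, ← RCLike.re_to_complex]
      exact inner_self_eq_norm_sq w'
    have hcs : ‖c‖ ≤ ‖v‖ * ‖w'‖ := by
      rw [hcinner]; exact norm_inner_le_norm v w'
    have hnormsq : (c * star c).re = ‖c‖ ^ 2 := by
      rw [Complex.star_def, Complex.mul_conj, Complex.normSq_eq_norm_sq, Complex.ofReal_re]
    have hre : c.re = ‖c‖ ^ 2 + (star w ⬝ᵥ (S *ᵥ w)).re + ‖w'‖ ^ 2 := by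
      have h := congrArg Complex.re hkey
      rw [Complex.add_re, Complex.add_re, hnormsq, htre] at h
      simpa using h
    have hxle : |c.re| ≤ ‖c‖ := Complex.abs_re_le_norm c
    set x : ℝ := c.re
    set V : ℝ := ‖v‖
    set W : ℝ := ‖w'‖
    have hV0 : 0 ≤ V := norm_nonneg _
    have hW0 : 0 ≤ W := norm_nonneg _
    have hC0 : 0 ≤ ‖c‖ := norm_nonneg _
    clear_value x V W
    have h1 : x ≥ x ^ 2 + W ^ 2 := by
      nlinarith [hre, hs0, mul_le_mul hxle hxle (abs_nonneg x) hC0, sq_abs x]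
    have h2 : x ≤ V * W := le_trans (le_trans (le_abs_self _) hxle) hcs
    rw [le_div_iff₀ hVpos]
    exact aux_real hV0 hW0 h1 h2
  · rw [div_lt_one hVpos]
    linarith
end

section
/- Let A and B be n×n Hermitian positive semidefinite complex matrices and P > 0 a real number. Then the supremum over all q ∈ ℂⁿ with ‖q‖² ≤ P of (1 + qᴴ A q)/(1 + qᴴ B q) equals the maximum of 1 and the supremum over all unit vectors ψ ∈ ℂⁿ of (1 + P·ψᴴ A ψ)/(1 + P·ψᴴ B ψ), and both suprema are attained. -/
open Matrix
open scoped ComplexOrder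

/-- The (real-valued) quadratic form `xᴴ M x` of a complex matrix on Euclidean space. -/
noncomputable def quadForm {n : ℕ} (M : Matrix (Fin n) (Fin n) ℂ)
    (x : EuclideanSpace ℂ (Fin n)) : ℝ :=
  (inner ℂ x (Matrix.toEuclideanLin M x) : ℂ).re

lemma quadForm_nonneg {n : ℕ} {M : Matrix (Fin n) (Fin n) ℂ} (hM : M.PosSemidef)
    (x : EuclideanSpace ℂ (Fin n)) : 0 ≤ quadForm M x := by
  have h := hM.re_dotProduct_nonneg (WithLp.equiv 2 (Fin n → ℂ) x)
  unfold quadForm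
  convert h using 2
  simp [EuclideanSpace.inner_eq_star_dotProduct, Matrix.toEuclideanLin, dotProduct_comm]

lemma quadForm_smul {n : ℕ} (M : Matrix (Fin n) (Fin n) ℂ) (s : ℝ)
    (x : EuclideanSpace ℂ (Fin n)) :
    quadForm M ((s : ℂ) • x) = s ^ 2 * quadForm M x := by
  unfold quadForm
  rw [_root_.map_smul (Matrix.toEuclideanLin M), inner_smul_left, inner_smul_right,
    Complex.conj_ofReal]
  simp [Complex.mul_re]
  ring

lemma quadForm_continuous {n : ℕ} (M : Matrix (Fin n) (Fin n) ℂ) :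
    Continuous (quadForm M) := by
  have h : Continuous fun x : EuclideanSpace ℂ (Fin n) => Matrix.toEuclideanLin M x :=
    (Matrix.toEuclideanLin M).continuous_of_finiteDimensional
  exact Complex.continuous_re.comp (Continuous.inner continuous_id h)

lemma ratio_le_max {a b s P : ℝ} (ha : 0 ≤ a) (hb : 0 ≤ b) (hs : 0 ≤ s) (hsP : s ≤ P) :
    (1 + s * a) / (1 + s * b) ≤ max 1 ((1 + P * a) / (1 + P * b)) := by
  have hsb : (0:ℝ) < 1 + s * b := by nlinarith
  have hPb : (0:ℝ) < 1 + P * b := by nlinarith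
  rcases le_total a b with hab | hab
  · refine le_max_of_le_left ?_
    rw [div_le_one hsb]
    nlinarith
  · refine le_max_of_le_right ?_
    rw [div_le_div_iff₀ hsb hPb]
    nlinarith

/-- Let `A, B` be `n × n` Hermitian positive semidefinite and `P > 0`.
The supremum over `‖q‖² ≤ P` of `(1 + qᴴ A q)/(1 + qᴴ B q)` equals the maximum of `1`
and the supremum over unit `ψ` of `(1 + P ψᴴ A ψ)/(1 + P ψᴴ B ψ)`, and both suprema
are attained. -/
theorem isGreatest_ratio_ball_eq_max_one_sphere
    {n : ℕ} (hn : 0 < n) (A B : Matrix (Fin n) (Fin n) ℂ)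
    (hA : A.PosSemidef) (hB : B.PosSemidef) (P : ℝ) (hP : 0 < P) :
    ∃ m₁ m₂ : ℝ,
      IsGreatest {r : ℝ | ∃ q : EuclideanSpace ℂ (Fin n), ‖q‖ ^ 2 ≤ P ∧
          r = (1 + quadForm A q) / (1 + quadForm B q)} m₁ ∧
      IsGreatest {r : ℝ | ∃ ψ : EuclideanSpace ℂ (Fin n), ‖ψ‖ = 1 ∧
          r = (1 + P * quadForm A ψ) / (1 + P * quadForm B ψ)} m₂ ∧
      m₁ = max 1 m₂ := by
  set f : EuclideanSpace ℂ (Fin n) → ℝ :=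
    fun ψ => (1 + P * quadForm A ψ) / (1 + P * quadForm B ψ) with hf_def
  have hdenom : ∀ ψ : EuclideanSpace ℂ (Fin n), (0:ℝ) < 1 + P * quadForm B ψ := by
    intro ψ
    have := quadForm_nonneg hB ψ
    positivity
  have hf : Continuous f := by
    apply Continuous.div
    · exact continuous_const.add (continuous_const.mul (quadForm_continuous A))
    · exact continuous_const.add (continuous_const.mul (quadForm_continuous B))
    · exact fun ψ => (hdenom ψ).ne'
  have hset : {r : ℝ | ∃ ψ : EuclideanSpace ℂ (Fin n), ‖ψ‖ = 1 ∧
      r = (1 + P * quadForm A ψ) / (1 + P * quadForm B ψ)}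
      = f '' Metric.sphere 0 1 := by
    ext r
    simp only [Set.mem_setOf_eq, Set.mem_image, mem_sphere_zero_iff_norm]
    constructor
    · rintro ⟨ψ, h1, h2⟩; exact ⟨ψ, h1, h2.symm⟩
    · rintro ⟨ψ, h1, h2⟩; exact ⟨ψ, h1, h2.symm⟩
  have hne : (Metric.sphere (0 : EuclideanSpace ℂ (Fin n)) 1).Nonempty := by
    refine ⟨EuclideanSpace.single ⟨0, hn⟩ (1 : ℂ), ?_⟩
    simp [mem_sphere_zero_iff_norm, EuclideanSpace.norm_single]
  obtain ⟨m₂, hm₂⟩ := ((isCompact_sphere (0 : EuclideanSpace ℂ (Fin n)) 1).image hf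
    ).exists_isGreatest (hne.image f)
  rw [← hset] at hm₂
  refine ⟨max 1 m₂, m₂, ?_, hm₂, rfl⟩
  constructor
  · -- membership
    rcases le_total m₂ 1 with h | h
    · rw [max_eq_left h]
      refine ⟨0, ?_, ?_⟩
      · simpa using hP.le
      · simp [quadForm, inner_zero_left]
    · rw [max_eq_right h]
      obtain ⟨ψ, hψ, hval⟩ := hm₂.1
      refine ⟨(Real.sqrt P : ℂ) • ψ, ?_, ?_⟩
      · rw [norm_smul, hψ, mul_one, Complex.norm_real, Real.norm_eq_abs,
          abs_of_nonneg (Real.sqrt_nonneg P), Real.sq_sqrt hP.le]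
      · rw [quadForm_smul, quadForm_smul, Real.sq_sqrt hP.le]
        exact hval
  · -- upper bound
    rintro r ⟨q, hq, rfl⟩
    by_cases hq0 : q = 0
    · subst hq0
      simp only [quadForm, map_zero, inner_zero_left, Complex.zero_re, add_zero, div_one]
      exact le_max_left 1 m₂
    · have hnq : (0:ℝ) < ‖q‖ := norm_pos_iff.mpr hq0
      set ψ : EuclideanSpace ℂ (Fin n) := ((‖q‖)⁻¹ : ℂ) • q with hψ_def
      have hψ1 : ‖ψ‖ = 1 := by
        rw [hψ_def, norm_smul, norm_inv, Complex.norm_real, Real.norm_eq_abs,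
          abs_of_nonneg hnq.le, inv_mul_cancel₀ hnq.ne']
      have hsq : ((‖q‖ : ℂ)) • ψ = q := by
        rw [hψ_def, smul_smul, mul_inv_cancel₀ (Complex.ofReal_ne_zero.mpr hnq.ne'), one_smul]
      have hAq := quadForm_smul A ‖q‖ ψ
      have hBq := quadForm_smul B ‖q‖ ψ
      rw [hsq] at hAq hBq
      rw [hAq, hBq]
      calc (1 + ‖q‖ ^ 2 * quadForm A ψ) / (1 + ‖q‖ ^ 2 * quadForm B ψ)
          ≤ max 1 ((1 + P * quadForm A ψ) / (1 + P * quadForm B ψ)) :=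
            ratio_le_max (quadForm_nonneg hA ψ) (quadForm_nonneg hB ψ) (by positivity) hq
        _ ≤ max 1 m₂ := max_le_max le_rfl (hm₂.2 ⟨ψ, hψ1, rfl⟩)
end

section
/- Let G_A ∈ ℂ^{N_A×N_R}, G_B ∈ ℂ^{N_B×N_R}, H_A ∈ ℂ^{N_R×N_A}, H_B ∈ ℂ^{N_R×N_B} be complex matrices and q_A ∈ ℂ^{N_A}, q_B ∈ ℂ^{N_B} vectors such that the matrix [H_A q_A H_B q_B] is nonzero. Let V be a matrix with orthonormal columns whose column space equals the column space of [G_Aᴴ G_Bᴴ], and let U be a matrix with orthonormal columns whose column space equals the column space of [H_A q_A H_B q_B]. For a relay matrix F ∈ ℂ^{N_R×N_R}, define the relay power P(F) = Tr(F H_A q_A q_Aᴴ H_Aᴴ Fᴴ + F H_B q_B q_Bᴴ H_Bᴴ Fᴴ + F Fᴴ) and, for i ∈ {A, B} with ī the other index, the SINR terms γ_i(F) = q_iᴴ H_iᴴ Fᴴ G_īᴴ (G_ī F Fᴴ G_īᴴ + I)⁻¹ G_ī F H_i q_i. Then for every F there exists a matrix A (of size: number of columns of V by number of columns of U) such that F'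 = V A Uᴴ satisfies P(F') ≤ P(F), γ_A(F') ≥ γ_A(F) and γ_B(F') ≥ γ_B(F). -/
open Matrix

section RelayAux

open scoped ComplexOrder

variable {n k : Type*} [Fintype n] [Fintype k] [DecidableEq n]

private lemma RelayAux.trace_re_nonneg (X : Matrix n k ℂ) :
    0 ≤ (Matrix.trace (X * Xᴴ)).re := by
  have h : (Matrix.trace (X * Xᴴ)).re = ∑ i, ∑ j, Complex.normSq (X i j) := by
    simp [Matrix.trace, Matrix.diag, Matrix.mul_apply, Matrix.conjTranspose_apply,
      Complex.mul_conj, Complex.re_sum]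
  rw [h]
  exact Finset.sum_nonneg fun i _ => Finset.sum_nonneg fun j _ => Complex.normSq_nonneg _

private lemma RelayAux.proj_idem (R : Matrix n n ℂ) (hR2 : R * R = R) :
    (1 - R) * (1 - R) = 1 - R := by
  rw [sub_mul, one_mul, mul_sub, mul_one, hR2, sub_self, sub_zero]

private lemma RelayAux.trace_one_sub_proj (R : Matrix n n ℂ) (hRh : Rᴴ = R) (hR2 : R * R = R)
    (C : Matrix n k ℂ) :
    Matrix.trace (((1 - R) * C) * ((1 - R) * C)ᴴ)
      = Matrix.trace (C * Cᴴ) - Matrix.trace (R * (C * Cᴴ)) := by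
  have hc : ((1 - R) * C)ᴴ = Cᴴ * (1 - R) := by
    rw [conjTranspose_mul, conjTranspose_sub, conjTranspose_one, hRh]
  rw [hc, Matrix.trace_mul_comm]
  have h1 : (Cᴴ * (1 - R)) * ((1 - R) * C) = Cᴴ * ((1 - R) * C) := by
    rw [Matrix.mul_assoc, ← Matrix.mul_assoc (1 - R), RelayAux.proj_idem R hR2]
  rw [h1, show (1 - R) * C = C - R * C by rw [Matrix.sub_mul, Matrix.one_mul],
    Matrix.mul_sub, trace_sub, Matrix.trace_mul_comm Cᴴ C, Matrix.trace_mul_comm Cᴴ (R * C),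
    Matrix.mul_assoc]

private lemma RelayAux.trace_proj_smul_le (R : Matrix n n ℂ) (hRh : Rᴴ = R) (hR2 : R * R = R)
    (C : Matrix n k ℂ) :
    (Matrix.trace (R * (C * Cᴴ))).re ≤ (Matrix.trace (C * Cᴴ)).re := by
  have h0 := RelayAux.trace_re_nonneg ((1 - R) * C)
  have h := congrArg Complex.re (RelayAux.trace_one_sub_proj R hRh hR2 C)
  rw [Complex.sub_re] at h
  linarith

private lemma RelayAux.trace_proj_mul_le (R : Matrix n n ℂ) (hRh : Rᴴ = R) (hR2 : R * R = R)
    (C : Matrix n k ℂ) :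
    (Matrix.trace ((R * C) * (R * C)ᴴ)).re ≤ (Matrix.trace (C * Cᴴ)).re := by
  have e2 : Matrix.trace ((R * C) * (R * C)ᴴ) = Matrix.trace (R * (C * Cᴴ)) := by
    rw [conjTranspose_mul, hRh, Matrix.trace_mul_comm, Matrix.mul_assoc,
      ← Matrix.mul_assoc R R C, hR2, Matrix.trace_mul_comm Cᴴ (R * C),
      Matrix.mul_assoc]
  rw [e2]
  exact RelayAux.trace_proj_smul_le R hRh hR2 C

private lemma RelayAux.re_dot_nonneg {M : Matrix n n ℂ} (hM : M.PosSemidef) (x : n → ℂ) :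
    0 ≤ (star x ⬝ᵥ (M *ᵥ x)).re := by
  simpa using hM.re_dotProduct_nonneg x

private lemma RelayAux.dot_proj_le (R : Matrix n n ℂ) (hRh : Rᴴ = R) (hR2 : R * R = R)
    (w : n → ℂ) :
    ((R *ᵥ w) ⬝ᵥ star (R *ᵥ w)).re ≤ (w ⬝ᵥ star w).re := by
  have h1R : (1 - R).PosSemidef := by
    have h := Matrix.posSemidef_conjTranspose_mul_self (1 - R)
    rwa [conjTranspose_sub, conjTranspose_one, hRh, RelayAux.proj_idem R hR2] at h
  have e1 : (R *ᵥ w) ⬝ᵥ star (R *ᵥ w) = star w ⬝ᵥ (R *ᵥ w) := by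
    rw [dotProduct_comm, star_mulVec, ← dotProduct_mulVec, mulVec_mulVec, hRh, hR2]
  have e3 : star w ⬝ᵥ ((1 - R) *ᵥ w) = star w ⬝ᵥ w - star w ⬝ᵥ (R *ᵥ w) := by
    rw [Matrix.sub_mulVec, dotProduct_sub, Matrix.one_mulVec]
  have h0 := RelayAux.re_dot_nonneg h1R w
  rw [e3] at h0
  rw [e1, dotProduct_comm w (star w)]
  rw [Complex.sub_re] at h0
  linarith

private lemma RelayAux.inv_quadratic_mono (S N : Matrix n n ℂ)
    (hS : S.PosSemidef) (hN : N.PosSemidef) (v : n → ℂ) :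
    (star v ⬝ᵥ ((S + N + 1)⁻¹ *ᵥ v)).re ≤ (star v ⬝ᵥ ((S + 1)⁻¹ *ᵥ v)).re := by
  have hB : (S + 1).PosDef := Matrix.PosDef.posSemidef_add hS Matrix.PosDef.one
  have hC : (S + N + 1).PosDef := Matrix.PosDef.posSemidef_add (hS.add hN) Matrix.PosDef.one
  set B := S + 1 with hBdef
  set C := S + N + 1 with hCdef
  set x := C⁻¹ *ᵥ v with hx
  set y := B⁻¹ *ᵥ v with hy
  have hBdet : IsUnit B.det := isUnit_iff_ne_zero.2 hB.det_pos.ne'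
  have hCdet : IsUnit C.det := isUnit_iff_ne_zero.2 hC.det_pos.ne'
  have hBy : B *ᵥ y = v := by rw [hy, mulVec_mulVec, Matrix.mul_nonsing_inv _ hBdet, one_mulVec]
  have hCx : C *ᵥ x = v := by rw [hx, mulVec_mulVec, Matrix.mul_nonsing_inv _ hCdet, one_mulVec]
  have hBh : Bᴴ = B := hB.isHermitian
  have hBinvh : (B⁻¹)ᴴ = B⁻¹ := hB.isHermitian.inv
  have e1 : star x ⬝ᵥ (B *ᵥ x) = star x ⬝ᵥ v - star x ⬝ᵥ (N *ᵥ x) := by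
    have hBC : B = C - N := by rw [hBdef, hCdef]; abel
    rw [hBC, Matrix.sub_mulVec, dotProduct_sub, hCx]
  have e2 : star x ⬝ᵥ (B *ᵥ y) = star x ⬝ᵥ v := by rw [hBy]
  have e3 : star y ⬝ᵥ (B *ᵥ x) = star v ⬝ᵥ x := by
    rw [dotProduct_mulVec]
    congr 1
    rw [← hBh, ← star_mulVec, hBy]
  have e4 : star y ⬝ᵥ (B *ᵥ y) = star v ⬝ᵥ y := by
    rw [hBy]
    have hysv : star y = star v ᵥ* B⁻¹ := by rw [hy, star_mulVec, hBinvh]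
    rw [hysv, ← dotProduct_mulVec, ← hy]
  have expand : star (x - y) ⬝ᵥ (B *ᵥ (x - y))
      = star x ⬝ᵥ (B *ᵥ x) - star x ⬝ᵥ (B *ᵥ y) - star y ⬝ᵥ (B *ᵥ x)
        + star y ⬝ᵥ (B *ᵥ y) := by
    rw [star_sub, Matrix.mulVec_sub, sub_dotProduct, dotProduct_sub, dotProduct_sub]
    ring
  have key : star v ⬝ᵥ y
      = star (x - y) ⬝ᵥ (B *ᵥ (x - y)) + star x ⬝ᵥ (N *ᵥ x) + star v ⬝ᵥ x := by
    rw [expand, e1, e2, e3, e4]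
    ring
  have h1 := RelayAux.re_dot_nonneg hB.posSemidef (x - y)
  have h2 := RelayAux.re_dot_nonneg hN x
  have hk := congrArg Complex.re key
  rw [Complex.add_re, Complex.add_re] at hk
  linarith

end RelayAux

/-- The relay transmit power
`Tr(F H_A q_A q_Aᴴ H_Aᴴ Fᴴ + F H_B q_B q_Bᴴ H_Bᴴ Fᴴ + F Fᴴ)` of the two-phase scheme. -/
noncomputable def relayPower2P {NA NB NR : ℕ}
    (HA : Matrix (Fin NR) (Fin NA) ℂ) (HB : Matrix (Fin NR) (Fin NB) ℂ)
    (qA : Fin NA → ℂ) (qB : Fin NB → ℂ)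
    (F : Matrix (Fin NR) (Fin NR) ℂ) : ℝ :=
  (Matrix.trace
    (Matrix.vecMulVec (F *ᵥ (HA *ᵥ qA)) (star (F *ᵥ (HA *ᵥ qA)))
      + Matrix.vecMulVec (F *ᵥ (HB *ᵥ qB)) (star (F *ᵥ (HB *ᵥ qB)))
      + F * Fᴴ)).re

/-- The SINR term `γ = sᴴ Fᴴ Gᴴ (G F Fᴴ Gᴴ + I)⁻¹ G F s` of the two-phase scheme,
where `s = H_i q_i` is the received signal direction and `G = G_ī`. -/
noncomputable def sinr2P {NR Nr : ℕ}
    (G : Matrix (Fin Nr) (Fin NR) ℂ) (s : Fin NR → ℂ)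
    (F : Matrix (Fin NR) (Fin NR) ℂ) : ℝ :=
  (star (G *ᵥ (F *ᵥ s)) ⬝ᵥ ((G * F * Fᴴ * Gᴴ + 1)⁻¹ *ᵥ (G *ᵥ (F *ᵥ s)))).re

open scoped ComplexOrder in
/-- Auxiliary: the SINR term does not decrease when `F` is replaced by `P F Q`
for a projection `Q` fixing `s` and `P` absorbed by `G`. -/
private lemma relay_sinr_aux {NR Nr : ℕ} (G : Matrix (Fin Nr) (Fin NR) ℂ) (s : Fin NR → ℂ)
    (F P Q : Matrix (Fin NR) (Fin NR) ℂ)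
    (hGP : G * P = G) (hQs : Q *ᵥ s = s) (hQh : Qᴴ = Q) (hQ2 : Q * Q = Q) :
    sinr2P G s F ≤ sinr2P G s (P * F * Q) := by
  have hvec : G *ᵥ ((P * F * Q) *ᵥ s) = G *ᵥ (F *ᵥ s) := by
    rw [← mulVec_mulVec, ← mulVec_mulVec, hQs, mulVec_mulVec, hGP]
  have hGF : G * (P * F * Q) = G * F * Q := by
    rw [← Matrix.mul_assoc, ← Matrix.mul_assoc, hGP]
  have hmat : G * (P * F * Q) * (P * F * Q)ᴴ * Gᴴ = (G * F * Q) * (G * F * Q)ᴴ := by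
    rw [Matrix.mul_assoc (G * (P * F * Q)) (P * F * Q)ᴴ Gᴴ, ← conjTranspose_mul, hGF]
  have hZ : (G * F * Q) * (G * F * Q)ᴴ = (G * F) * (Q * (Fᴴ * Gᴴ)) := by
    rw [conjTranspose_mul, conjTranspose_mul, hQh, Matrix.mul_assoc (G * F) Q,
      ← Matrix.mul_assoc Q Q, hQ2]
  have hW : (G * F * (1 - Q)) * (G * F * (1 - Q))ᴴ = (G * F) * ((1 - Q) * (Fᴴ * Gᴴ)) := by
    rw [conjTranspose_mul, conjTranspose_mul, conjTranspose_sub, conjTranspose_one, hQh,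
      Matrix.mul_assoc (G * F) (1 - Q), ← Matrix.mul_assoc (1 - Q) (1 - Q),
      RelayAux.proj_idem Q hQ2]
  have hsum : G * F * Fᴴ * Gᴴ
      = (G * F * Q) * (G * F * Q)ᴴ + (G * F * (1 - Q)) * (G * F * (1 - Q))ᴴ := by
    rw [hZ, hW, ← Matrix.mul_add,
      show Q * (Fᴴ * Gᴴ) + (1 - Q) * (Fᴴ * Gᴴ) = Fᴴ * Gᴴ by
        rw [Matrix.sub_mul, Matrix.one_mul]; abel,
      Matrix.mul_assoc]
  simp only [sinr2P]
  rw [hvec, hmat, hsum]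
  exact RelayAux.inv_quadratic_mono _ _ (Matrix.posSemidef_self_mul_conjTranspose _)
    (Matrix.posSemidef_self_mul_conjTranspose _) _

/-- **Lemma 1 of the paper.** For every relay matrix `F` there exists a
matrix `A` such that the structured matrix `F' = V A Uᴴ` uses no more relay power while
achieving SINR terms `γ_A` and `γ_B` at least as large. -/
theorem relay_beamformer_structure_2P
    {NA NB NR kV kU : ℕ}
    (GA : Matrix (Fin NA) (Fin NR) ℂ) (GB : Matrix (Fin NB) (Fin NR) ℂ)
    (HA : Matrix (Fin NR) (Fin NA) ℂ) (HB : Matrix (Fin NR) (Fin NB) ℂ)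
    (qA : Fin NA → ℂ) (qB : Fin NB → ℂ)
    (hne : ¬(HA *ᵥ qA = 0 ∧ HB *ᵥ qB = 0))
    (V : Matrix (Fin NR) (Fin kV) ℂ) (hV : Vᴴ * V = 1)
    (hVspan : LinearMap.range (Matrix.toEuclideanLin V)
        = LinearMap.range (Matrix.toEuclideanLin GAᴴ)
          ⊔ LinearMap.range (Matrix.toEuclideanLin GBᴴ))
    (U : Matrix (Fin NR) (Fin kU) ℂ) (hU : Uᴴ * U = 1)
    (hUspan : LinearMap.range (Matrix.toEuclideanLin U)
        = Submodule.span ℂ {(WithLp.toLp 2 (HA *ᵥ qA) : EuclideanSpace ℂ (Fin NR)),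
            (WithLp.toLp 2 (HB *ᵥ qB) : EuclideanSpace ℂ (Fin NR))}) :
    ∀ F : Matrix (Fin NR) (Fin NR) ℂ,
      ∃ A : Matrix (Fin kV) (Fin kU) ℂ,
        relayPower2P HA HB qA qB (V * A * Uᴴ) ≤ relayPower2P HA HB qA qB F ∧
        sinr2P GB (HA *ᵥ qA) F ≤ sinr2P GB (HA *ᵥ qA) (V * A * Uᴴ) ∧
        sinr2P GA (HB *ᵥ qB) F ≤ sinr2P GA (HB *ᵥ qB) (V * A * Uᴴ) := by
  intro F
  -- projections
  have hPh : (V * Vᴴ)ᴴ = V * Vᴴ := by rw [conjTranspose_mul, conjTranspose_conjTranspose]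
  have hP2 : (V * Vᴴ) * (V * Vᴴ) = V * Vᴴ := by
    rw [Matrix.mul_assoc, ← Matrix.mul_assoc Vᴴ V Vᴴ, hV, Matrix.one_mul]
  have hQh : (U * Uᴴ)ᴴ = U * Uᴴ := by rw [conjTranspose_mul, conjTranspose_conjTranspose]
  have hQ2 : (U * Uᴴ) * (U * Uᴴ) = U * Uᴴ := by
    rw [Matrix.mul_assoc, ← Matrix.mul_assoc Uᴴ U Uᴴ, hU, Matrix.one_mul]
  -- the projection U Uᴴ fixes vectors in the range of U
  have hfixU : ∀ s : Fin NR → ℂ,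
      (WithLp.toLp 2 s : EuclideanSpace ℂ (Fin NR)) ∈ LinearMap.range (Matrix.toEuclideanLin U) →
      (U * Uᴴ) *ᵥ s = s := by
    intro s hs
    obtain ⟨y, hy⟩ := hs
    have hy' : U *ᵥ y.ofLp = s := congrArg WithLp.ofLp hy
    rw [← hy', mulVec_mulVec, Matrix.mul_assoc, hU, Matrix.mul_one]
  have hfixV : ∀ s : Fin NR → ℂ,
      (WithLp.toLp 2 s : EuclideanSpace ℂ (Fin NR)) ∈ LinearMap.range (Matrix.toEuclideanLin V) →
      (V * Vᴴ) *ᵥ s = s := by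
    intro s hs
    obtain ⟨y, hy⟩ := hs
    have hy' : V *ᵥ y.ofLp = s := congrArg WithLp.ofLp hy
    rw [← hy', mulVec_mulVec, Matrix.mul_assoc, hV, Matrix.mul_one]
  have hQsA : (U * Uᴴ) *ᵥ (HA *ᵥ qA) = HA *ᵥ qA := by
    refine hfixU _ ?_
    rw [hUspan]
    exact Submodule.subset_span (Set.mem_insert _ _)
  have hQsB : (U * Uᴴ) *ᵥ (HB *ᵥ qB) = HB *ᵥ qB := by
    refine hfixU _ ?_
    rw [hUspan]
    exact Submodule.subset_span (Set.mem_insert_of_mem _ rfl)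
  -- G * (V Vᴴ) = G for G = GA, GB
  have hPG : ∀ {m : ℕ} (G : Matrix (Fin m) (Fin NR) ℂ),
      LinearMap.range (Matrix.toEuclideanLin Gᴴ) ≤ LinearMap.range (Matrix.toEuclideanLin V) →
      G * (V * Vᴴ) = G := by
    intro m G hle
    have hPGh : (V * Vᴴ) * Gᴴ = Gᴴ := by
      ext i j
      have hmem : (WithLp.toLp 2 (Gᴴ *ᵥ Pi.single j 1 : Fin NR → ℂ) : EuclideanSpace ℂ (Fin NR))
          ∈ LinearMap.range (Matrix.toEuclideanLin Gᴴ) :=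
        ⟨WithLp.toLp 2 (Pi.single j 1 : Fin m → ℂ), rfl⟩
      have h := hfixV _ (hle hmem)
      rw [mulVec_mulVec] at h
      have h2 := congrFun h i
      simpa using h2
    have := congrArg conjTranspose hPGh
    rwa [conjTranspose_mul, conjTranspose_conjTranspose, hPh] at this
  have hGAP : GA * (V * Vᴴ) = GA := by
    refine hPG GA ?_
    rw [hVspan]; exact le_sup_left
  have hGBP : GB * (V * Vᴴ) = GB := by
    refine hPG GB ?_
    rw [hVspan]; exact le_sup_right
  have hF' : V * (Vᴴ * F * U) * Uᴴ = (V * Vᴴ) * F * (U * Uᴴ) := by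
    simp only [Matrix.mul_assoc]
  refine ⟨Vᴴ * F * U, ?_, ?_, ?_⟩
  · -- power
    rw [hF']
    have hw : ∀ s : Fin NR → ℂ, (U * Uᴴ) *ᵥ s = s →
        ((V * Vᴴ) * F * (U * Uᴴ)) *ᵥ s = (V * Vᴴ) *ᵥ (F *ᵥ s) := by
      intro s hs
      rw [← mulVec_mulVec, ← mulVec_mulVec, hs]
    have tvv : ∀ v : Fin NR → ℂ,
        Matrix.trace (Matrix.vecMulVec v (star v)) = v ⬝ᵥ star v := by
      intro v
      simp [Matrix.trace, Matrix.diag, Matrix.vecMulVec_apply, dotProduct]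
    simp only [relayPower2P, Matrix.trace_add, Complex.add_re, hw _ hQsA, hw _ hQsB, tvv]
    have hA1 := RelayAux.dot_proj_le (V * Vᴴ) hPh hP2 (F *ᵥ (HA *ᵥ qA))
    have hB1 := RelayAux.dot_proj_le (V * Vᴴ) hPh hP2 (F *ᵥ (HB *ᵥ qB))
    have hFr : (Matrix.trace (((V * Vᴴ) * F * (U * Uᴴ)) * ((V * Vᴴ) * F * (U * Uᴴ))ᴴ)).re
        ≤ (Matrix.trace (F * Fᴴ)).re := by
      have s1 : (Matrix.trace (((V * Vᴴ) * (F * (U * Uᴴ))) * ((V * Vᴴ) * (F * (U * Uᴴ)))ᴴ)).re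
          ≤ (Matrix.trace ((F * (U * Uᴴ)) * (F * (U * Uᴴ))ᴴ)).re :=
        RelayAux.trace_proj_mul_le (V * Vᴴ) hPh hP2 (F * (U * Uᴴ))
      have s2 : (Matrix.trace ((F * (U * Uᴴ)) * (F * (U * Uᴴ))ᴴ)).re
          ≤ (Matrix.trace (F * Fᴴ)).re := by
        have h2 := RelayAux.trace_proj_mul_le (U * Uᴴ) hQh hQ2 Fᴴ
        rw [conjTranspose_conjTranspose, Matrix.trace_mul_comm Fᴴ F] at h2
        have e0 : (U * Uᴴ) * Fᴴ = (F * (U * Uᴴ))ᴴ := by rw [conjTranspose_mul, hQh]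
        rw [e0, conjTranspose_conjTranspose, Matrix.trace_mul_comm] at h2
        exact h2
      calc (Matrix.trace (((V * Vᴴ) * F * (U * Uᴴ)) * ((V * Vᴴ) * F * (U * Uᴴ))ᴴ)).re
          = (Matrix.trace (((V * Vᴴ) * (F * (U * Uᴴ))) * ((V * Vᴴ) * (F * (U * Uᴴ)))ᴴ)).re := by
            rw [Matrix.mul_assoc (V * Vᴴ) F (U * Uᴴ)]
        _ ≤ (Matrix.trace ((F * (U * Uᴴ)) * (F * (U * Uᴴ))ᴴ)).re := s1
        _ ≤ (Matrix.trace (F * Fᴴ)).re := s2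
    exact add_le_add (add_le_add hA1 hB1) hFr
  · rw [hF']
    exact relay_sinr_aux GB (HA *ᵥ qA) F (V * Vᴴ) (U * Uᴴ) hGBP hQsA hQh hQ2
  · rw [hF']
    exact relay_sinr_aux GA (HB *ᵥ qB) F (V * Vᴴ) (U * Uᴴ) hGAP hQsB hQh hQ2
end
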